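/- Let G be a δ-harmonic graph with an edge e = xy such that G − e is connected. Construct L from two disjoint copies G₁, G₂ of G with corresponding edges x₁y₁ and x₂y₂ by deleting those edges and adding edges x₁y₂ and x₂y₁. Then L is a connected δ-harmonic graph on twice as many vertices. -/

import Mathlib

open Matrix SimpleGraph
set_option linter.unusedSectionVars false

/-- Two copies of `G` with the copies of the edge `xy` deleted and replaced by the two
"crossing" edges `x₁y₂`, `x₂y₁`. -/
def doubleSwapGraph {V : Type*} (G : SimpleGraph V) (x y : V) : SimpleGraph (V ⊕ V) where
  Adj a b := match a, b with
    | Sum.inl a, Sum.inl b => G.Adj a b ∧ ¬((a = x ∧ b = y) ∨ (a = y ∧ b = x))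
    | Sum.inr a, Sum.inr b => G.Adj a b ∧ ¬((a = x ∧ b = y) ∨ (a = y ∧ b = x))
    | Sum.inl a, Sum.inr b => (a = x ∧ b = y) ∨ (a = y ∧ b = x)
    | Sum.inr b, Sum.inl a => (a = x ∧ b = y) ∨ (a = y ∧ b = x)
  symm := by
    constructor
    rintro (a | a) (b | b) h
    · exact ⟨h.1.symm, fun hc => h.2 (by tauto)⟩
    · exact by tauto
    · exact by tauto
    · exact ⟨h.1.symm, fun hc => h.2 (by tauto)⟩
  loopless := by
    constructor
    rintro (a | a) h
    · exact G.irrefl h.1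
    · exact G.irrefl h.1

section
variable {V : Type*} [Fintype V] [DecidableEq V]
  (G : SimpleGraph V) [DecidableRel G.Adj] (x y : V)

lemma dsg_adj_ll (a b : V) : (doubleSwapGraph G x y).Adj (Sum.inl a) (Sum.inl b) ↔
    G.Adj a b ∧ ¬((a = x ∧ b = y) ∨ (a = y ∧ b = x)) := Iff.rfl
lemma dsg_adj_rr (a b : V) : (doubleSwapGraph G x y).Adj (Sum.inr a) (Sum.inr b) ↔
    G.Adj a b ∧ ¬((a = x ∧ b = y) ∨ (a = y ∧ b = x)) := Iff.rfl
lemma dsg_adj_lr (a b : V) : (doubleSwapGraph G x y).Adj (Sum.inl a) (Sum.inr b) ↔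
    ((a = x ∧ b = y) ∨ (a = y ∧ b = x)) := Iff.rfl
lemma dsg_adj_rl (a b : V) : (doubleSwapGraph G x y).Adj (Sum.inr a) (Sum.inl b) ↔
    ((b = x ∧ a = y) ∨ (b = y ∧ a = x)) := Iff.rfl

variable [DecidableRel (doubleSwapGraph G x y).Adj]

lemma key_inl (hxy : G.Adj x y) (f : V ⊕ V → ℝ) (v : V) :
    ((doubleSwapGraph G x y).adjMatrix ℝ).mulVec f (Sum.inl v) =
    (G.adjMatrix ℝ).mulVec (fun u => f (Sum.inl u)) v +
      (if v = x then f (Sum.inr y) - f (Sum.inl y)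
       else if v = y then f (Sum.inr x) - f (Sum.inl x) else 0) := by
  have hne : x ≠ y := hxy.ne
  simp only [mulVec, dotProduct, adjMatrix_apply, Fintype.sum_sum_type]
  rw [← sub_eq_iff_eq_add', ← Finset.sum_add_distrib, ← Finset.sum_sub_distrib]
  by_cases hvx : v = x
  · subst hvx
    rw [if_pos rfl, Finset.sum_eq_single y]
    · simp [dsg_adj_ll, dsg_adj_lr, hxy, hne]
    · intro u _ hu
      simp [dsg_adj_ll, dsg_adj_lr, hu, hne, Ne.symm hne]
    · simp
  · by_cases hvy : v = y
    · subst hvy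
      rw [if_neg hvx, if_pos rfl, Finset.sum_eq_single x]
      · simp [dsg_adj_ll, dsg_adj_lr, hxy.symm, hne, Ne.symm hne]
      · intro u _ hu
        simp [dsg_adj_ll, dsg_adj_lr, hu, hne, Ne.symm hne]
      · simp
    · rw [if_neg hvx, if_neg hvy]
      apply Finset.sum_eq_zero
      intro u _
      simp [dsg_adj_ll, dsg_adj_lr, hvx, hvy]

lemma key_inr (hxy : G.Adj x y) (f : V ⊕ V → ℝ) (v : V) :
    ((doubleSwapGraph G x y).adjMatrix ℝ).mulVec f (Sum.inr v) =
    (G.adjMatrix ℝ).mulVec (fun u => f (Sum.inr u)) v +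
      (if v = x then f (Sum.inl y) - f (Sum.inr y)
       else if v = y then f (Sum.inl x) - f (Sum.inr x) else 0) := by
  have hne : x ≠ y := hxy.ne
  simp only [mulVec, dotProduct, adjMatrix_apply, Fintype.sum_sum_type]
  rw [← sub_eq_iff_eq_add', ← Finset.sum_add_distrib, ← Finset.sum_sub_distrib]
  by_cases hvx : v = x
  · subst hvx
    rw [if_pos rfl, Finset.sum_eq_single y]
    · simp [dsg_adj_rr, dsg_adj_rl, hxy, hne]
    · intro u _ hu
      simp [dsg_adj_rr, dsg_adj_rl, hu, hne, Ne.symm hne]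
    · simp
  · by_cases hvy : v = y
    · subst hvy
      rw [if_neg hvx, if_pos rfl, Finset.sum_eq_single x]
      · simp [dsg_adj_rr, dsg_adj_rl, hxy.symm, hne, Ne.symm hne]
      · intro u _ hu
        simp [dsg_adj_rr, dsg_adj_rl, hu, hne, Ne.symm hne]
      · simp
    · rw [if_neg hvx, if_neg hvy]
      apply Finset.sum_eq_zero
      intro u _
      simp [dsg_adj_rr, dsg_adj_rl, hvx, hvy]
end

theorem stmt_14 {V : Type*} [Fintype V] [DecidableEq V]
    (G : SimpleGraph V) [DecidableRel G.Adj] (δ : ℕ)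
    (hharm : (G.adjMatrix ℝ).mulVec ((G.adjMatrix ℝ).mulVec (fun _ => (1 : ℝ))) =
      (δ : ℝ) • (G.adjMatrix ℝ).mulVec (fun _ => (1 : ℝ)))
    (x y : V) (hxy : G.Adj x y)
    (hconn : (G.deleteEdges {s(x, y)}).Connected)
    [DecidableRel (doubleSwapGraph G x y).Adj] :
    (doubleSwapGraph G x y).Connected ∧
    ((doubleSwapGraph G x y).adjMatrix ℝ).mulVec
        (((doubleSwapGraph G x y).adjMatrix ℝ).mulVec (fun _ => (1 : ℝ))) =
      (δ : ℝ) • ((doubleSwapGraph G x y).adjMatrix ℝ).mulVec (fun _ => (1 : ℝ)) ∧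
    Fintype.card (V ⊕ V) = 2 * Fintype.card V := by
  have hdegl : ∀ v, ((doubleSwapGraph G x y).adjMatrix ℝ).mulVec (fun _ => (1 : ℝ)) (Sum.inl v)
      = (G.adjMatrix ℝ).mulVec (fun _ => (1 : ℝ)) v := by
    intro v
    rw [key_inl G x y hxy]
    split_ifs <;> simp
  have hdegr : ∀ v, ((doubleSwapGraph G x y).adjMatrix ℝ).mulVec (fun _ => (1 : ℝ)) (Sum.inr v)
      = (G.adjMatrix ℝ).mulVec (fun _ => (1 : ℝ)) v := by
    intro v
    rw [key_inr G x y hxy]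
    split_ifs <;> simp
  refine ⟨?_, ?_, by simp [two_mul]⟩
  · -- connectivity
    have hmap : ∀ {a b : V}, (G.deleteEdges {s(x, y)}).Adj a b →
        (G.Adj a b ∧ ¬((a = x ∧ b = y) ∨ (a = y ∧ b = x))) := by
      intro a b h
      rw [SimpleGraph.deleteEdges_adj] at h
      refine ⟨h.1, fun hc => h.2 ?_⟩
      rcases hc with ⟨rfl, rfl⟩ | ⟨rfl, rfl⟩
      · rfl
      · exact Set.mem_singleton_iff.mpr (Sym2.eq_swap)
    have rl : ∀ a b : V, (doubleSwapGraph G x y).Reachable (Sum.inl a) (Sum.inl b) :=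
      fun a b => (hconn.preconnected a b).map
        (⟨Sum.inl, fun h => hmap h⟩ : G.deleteEdges {s(x, y)} →g doubleSwapGraph G x y)
    have rr : ∀ a b : V, (doubleSwapGraph G x y).Reachable (Sum.inr a) (Sum.inr b) :=
      fun a b => (hconn.preconnected a b).map
        (⟨Sum.inr, fun h => hmap h⟩ : G.deleteEdges {s(x, y)} →g doubleSwapGraph G x y)
    have cross : (doubleSwapGraph G x y).Adj (Sum.inl x) (Sum.inr y) := Or.inl ⟨rfl, rfl⟩
    have rlr : ∀ a b : V, (doubleSwapGraph G x y).Reachable (Sum.inl a) (Sum.inr b) :=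
      fun a b => ((rl a x).trans cross.reachable).trans (rr y b)
    have : Nonempty (V ⊕ V) := ⟨Sum.inl x⟩
    refine SimpleGraph.Connected.mk ?_
    rintro (a | a) (b | b)
    · exact rl a b
    · exact rlr a b
    · exact (rlr b a).symm
    · exact rr a b
  · -- harmonic
    funext a
    cases a with
    | inl v =>
      have h1 := congrFun hharm v
      simp only [Pi.smul_apply, smul_eq_mul] at h1
      simp at h1
      rw [key_inl G x y hxy]
      simp only [hdegl, hdegr, Pi.smul_apply, smul_eq_mul]
      split_ifs <;> simp [h1]
    | inr v =>
      have h1 := congrFun hharm v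
      simp only [Pi.smul_apply, smul_eq_mul] at h1
      simp at h1
      rw [key_inr G x y hxy]
      simp only [hdegl, hdegr, Pi.smul_apply, smul_eq_mul]
      split_ifs <;> simp [h1]
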